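/- The marginal gains of the full objective satisfy: for S ⊆ I with |S| ≥ max_c h_c and e ∉ S, F(S ∪ {e}) − F(S) = Σ_{c∈C} max(W(e,c) − τ_{h_c,c}(S), 0), where τ_{h_c,c}(S) is the h_c-th largest value of W(·,c) on S. -/

import Mathlib

open Finset

/-- Sum of the `k` largest elements of a finite multiset of reals
(all elements if fewer than `k`). -/
noncomputable def topSum (k : ℕ) (M : Multiset ℝ) : ℝ :=
  ((M.sort (· ≥ ·)).take k).sum

/-- Single-category top-`h` sum of weights `w` over a finite set `S`. -/
noncomputable def topSet {I : Type*} (w : I → ℝ) (h : ℕ) (S : Finset I) : ℝ :=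
  topSum h (S.val.map w)

/-- The `h`-th largest value of `w` on `S` (meaningful when `h ≤ S.card`). -/
noncomputable def kthLargest {I : Type*} (w : I → ℝ) (h : ℕ) (S : Finset I) : ℝ :=
  ((S.val.map w).sort (· ≥ ·)).getD (h - 1) 0

private lemma sort_cons_eq (a : ℝ) (M : Multiset ℝ) :
    (a ::ₘ M).sort (· ≥ ·) = (M.sort (· ≥ ·)).orderedInsert (· ≥ ·) a := by
  refine List.Perm.eq_of_pairwise' (r := (· ≥ · : ℝ → ℝ → Prop))
    (Multiset.pairwise_sort _ _) ((Multiset.pairwise_sort M (· ≥ ·)).orderedInsert a _) ?_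
  refine Multiset.coe_eq_coe.1 ?_
  rw [Multiset.sort_eq]
  have := Multiset.coe_eq_coe.2 (List.perm_orderedInsert (· ≥ ·) a (M.sort (· ≥ ·)))
  rw [this, ← Multiset.cons_coe, Multiset.sort_eq]

private lemma key (a : ℝ) : ∀ (L : List ℝ), L.Pairwise (· ≥ ·) → ∀ (n : ℕ) (hn : n < L.length),
    ((L.orderedInsert (· ≥ ·) a).take (n + 1)).sum
      = (L.take (n + 1)).sum + max (a - L.get ⟨n, hn⟩) 0
  | [], _, n, hn => by simp at hn
  | b :: L', hs, n, hn => by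
    rw [List.orderedInsert]
    by_cases hab : a ≥ b
    · rw [if_pos hab]
      have hge : (b :: L').get ⟨n, hn⟩ ≤ a := by
        rcases n with _ | m
        · exact hab
        · exact le_trans ((List.pairwise_cons.1 hs).1 _ (List.get_mem L' _)) hab
      rw [List.take_succ_cons, List.sum_cons, List.sum_take_succ _ _ hn,
        max_eq_left (by linarith)]
      simp [List.get_eq_getElem]
      ring
    · rw [if_neg hab]
      push_neg at hab
      rcases n with _ | m
      · simp [max_eq_right (by linarith : a - b ≤ 0)]
      · have hm : m < L'.length := by simpa using hn
        rw [List.take_succ_cons, List.sum_cons,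
          key a L' (List.pairwise_cons.1 hs).2 m hm,
          List.take_succ_cons, List.sum_cons]
        simp [List.get]
        ring

private lemma single {I : Type*} [DecidableEq I] (w : I → ℝ) (h : ℕ) (hh : 1 ≤ h)
    (S : Finset I) (hS : h ≤ S.card) (e : I) (he : e ∉ S) :
    topSet w h (insert e S) = topSet w h S + max (w e - kthLargest w h S) 0 := by
  obtain ⟨n, rfl⟩ : ∃ n, h = n + 1 := ⟨h - 1, (Nat.succ_pred_eq_of_pos hh).symm⟩
  have hval : (insert e S).val = e ::ₘ S.val := Finset.insert_val_of_notMem he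
  have hlen : n < ((S.val.map w).sort (· ≥ ·)).length := by
    rw [Multiset.length_sort, Multiset.card_map]
    exact lt_of_lt_of_le (Nat.lt_succ_self n) hS
  have hk : kthLargest w (n + 1) S = ((S.val.map w).sort (· ≥ ·)).get ⟨n, hlen⟩ := by
    rw [kthLargest, Nat.add_sub_cancel, List.getD_eq_get (i := ⟨n, hlen⟩)]
  rw [topSet, topSet, topSum, topSum, hval, Multiset.map_cons, sort_cons_eq,
    key (w e) _ (Multiset.pairwise_sort _ _) n hlen, hk]

theorem full_objective_marginal_gain {I C : Type*} [Fintype I] [Fintype C] [DecidableEq I]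
    (W : I → C → ℝ) (hW : ∀ v c, 0 ≤ W v c)
    (h : C → ℕ) (hh : ∀ c, 1 ≤ h c)
    (S : Finset I) (hS : ∀ c, h c ≤ S.card) (e : I) (he : e ∉ S) :
    (∑ c : C, topSet (fun v => W v c) (h c) (insert e S)) -
        (∑ c : C, topSet (fun v => W v c) (h c) S) =
      ∑ c : C, max (W e c - kthLargest (fun v => W v c) (h c) S) 0 := by
  rw [← Finset.sum_sub_distrib]
  refine Finset.sum_congr rfl fun c _ => ?_
  rw [single (fun v => W v c) (h c) (hh c) S (hS c) e he]
  ring
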